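/- Let β > 0 and 0 < γ < β². Set c_n = e^{γn}, a_n = n^{1/2} e^{nγ²/(2β²)}, and α = γ/β². Then limsup_{n→∞} (a_n/c_n) · ∫_0^∞ x e^{-x} (1/√(2π)) ∫_{-∞}^∞ e^{-z²/2} 1\{x e^{β√n z} ≤ ε c_n\} e^{β√n z} dz dx ≤ (1/(β - γ/β)) · ε^{1-α} · ∫_0^∞ x^α e^{-x} dx, for every ε ∈ (0,1]. -/

import Mathlib

open MeasureTheory Real Set Filter

lemma gauss_integrable (s : ℝ) : Integrable (fun z : ℝ => Real.exp (-(z - s)^2/2)) := by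
  have h := (integrable_exp_neg_mul_sq (by norm_num : (0:ℝ) < 1/2)).comp_sub_right s
  convert h using 2 with z
  ring_nf

lemma gauss_integrable0 : Integrable (fun z : ℝ => Real.exp (-z^2/2)) := by
  simpa using gauss_integrable 0

lemma gauss_total : ∫ z : ℝ, Real.exp (-z^2/2) = Real.sqrt (2*π) := by
  have h := integral_gaussian (1/2)
  rw [show ((π:ℝ) / (1/2)) = 2*π by ring] at h
  rw [← h]
  congr 1 with z
  ring_nf

lemma Iic_gauss_le_total (t : ℝ) : ∫ w in Iic t, Real.exp (-w^2/2) ≤ Real.sqrt (2*π) := by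
  rw [← gauss_total]
  exact setIntegral_le_integral gauss_integrable0
    (Eventually.of_forall fun w => (Real.exp_pos _).le)

lemma gauss_tail {u : ℝ} (hu : 0 < u) :
    ∫ z in Ioi u, Real.exp (-z^2/2) ≤ u⁻¹ * Real.exp (-u^2/2) := by
  have hint : IntegrableOn (fun z : ℝ => z * Real.exp (-z^2/2)) (Ioi u) := by
    have := (integrable_mul_exp_neg_mul_sq (by norm_num : (0:ℝ) < 1/2)).integrableOn (s := Ioi u)
    refine this.congr_fun (fun z _ => by ring_nf) measurableSet_Ioi
  have hftc : ∫ z in Ioi u, z * Real.exp (-z^2/2) = Real.exp (-u^2/2) := by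
    have hderiv : ∀ z ∈ Ioi u, HasDerivAt (fun z : ℝ => -Real.exp (-z^2/2))
        (z * Real.exp (-z^2/2)) z := by
      intro z _
      have h1 : HasDerivAt (fun z : ℝ => -z^2/2) (-z) z := by
        have := ((hasDerivAt_pow 2 z).neg.div_const 2)
        exact this.congr_deriv (by push_cast; ring)
      exact (h1.exp).neg.congr_deriv (by ring)
    have htend : Tendsto (fun z : ℝ => -Real.exp (-z^2/2)) atTop (nhds 0) := by
      rw [show (0:ℝ) = -0 by ring]
      refine (Real.tendsto_exp_atBot.comp ?_).neg
      have h2 : Tendsto (fun z : ℝ => z^2/2) atTop atTop :=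
        (tendsto_pow_atTop (by norm_num)).atTop_div_const (by norm_num)
      simpa [neg_div] using tendsto_neg_atBot_iff.mpr h2
    have hcont : ContinuousWithinAt (fun z : ℝ => -Real.exp (-z^2/2)) (Ici u) u :=
      (Continuous.continuousWithinAt (by continuity))
    have := integral_Ioi_of_hasDerivAt_of_tendsto hcont hderiv hint htend
    rw [this]; ring
  calc ∫ z in Ioi u, Real.exp (-z^2/2) ≤ ∫ z in Ioi u, u⁻¹ * (z * Real.exp (-z^2/2)) := by
        refine setIntegral_mono_on gauss_integrable0.integrableOn
          (hint.const_mul _) measurableSet_Ioi (fun z hz => ?_)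
        rw [← mul_assoc]
        have h1 : (1:ℝ) ≤ u⁻¹ * z := by
          rw [inv_mul_eq_div, le_div_iff₀ hu]; simpa using hz.le
        calc Real.exp (-z^2/2) = 1 * Real.exp (-z^2/2) := by ring
          _ ≤ (u⁻¹ * z) * Real.exp (-z^2/2) :=
            mul_le_mul_of_nonneg_right h1 (Real.exp_pos _).le
    _ = u⁻¹ * Real.exp (-u^2/2) := by rw [integral_const_mul, hftc]

lemma Iic_gauss_le_tail {t u : ℝ} (hu : 0 < u) (htu : t ≤ -u) :
    ∫ w in Iic t, Real.exp (-w^2/2) ≤ u⁻¹ * Real.exp (-u^2/2) := by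
  have hmono : ∫ w in Iic t, Real.exp (-w^2/2) ≤ ∫ w in Iic (-u), Real.exp (-w^2/2) :=
    setIntegral_mono_set gauss_integrable0.integrableOn
      (Eventually.of_forall fun w => (Real.exp_pos _).le)
      (HasSubset.Subset.eventuallyLE (Iic_subset_Iic.mpr htu))
  have hsym : ∫ w in Iic (-u), Real.exp (-w^2/2) = ∫ w in Ioi u, Real.exp (-w^2/2) := by
    rw [show Ioi u = Ioi (-(-u)) by rw [neg_neg]]
    rw [← integral_comp_neg_Iic (-u) (fun w => Real.exp (-w^2/2))]
    congr 1 with w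
    ring_nf
  exact hmono.trans (hsym ▸ gauss_tail hu)

lemma inner_eq (x M s : ℝ) (hx : 0 < x) (hM : 0 < M) (hs : 0 < s) :
    (∫ z : ℝ, if x * Real.exp (s * z) ≤ M then Real.exp (-z^2/2) * Real.exp (s*z) else 0)
    = Real.exp (s^2/2) * ∫ w in Iic (Real.log (M/x)/s - s), Real.exp (-w^2/2) := by
  set t := Real.log (M/x)/s with ht
  have hcond : ∀ z : ℝ, (x * Real.exp (s * z) ≤ M) ↔ z ≤ t := by
    intro z
    rw [← le_div_iff₀' hx, ← Real.le_log_iff_exp_le (div_pos hM hx), ht,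
      le_div_iff₀ hs, mul_comm]
  have h1 : (fun z : ℝ => if x * Real.exp (s * z) ≤ M then Real.exp (-z^2/2) * Real.exp (s*z) else 0)
      = Set.indicator (Iic t) (fun z => Real.exp (s^2/2) * Real.exp (-(z-s)^2/2)) := by
    funext z
    rw [Set.indicator_apply]
    by_cases h : z ≤ t
    · rw [if_pos ((hcond z).mpr h), if_pos (mem_Iic.mpr h), ← Real.exp_add, ← Real.exp_add]
      ring_nf
    · rw [if_neg (fun hh => h ((hcond z).mp hh)), if_neg (fun hh => h (mem_Iic.mp hh))]
  rw [h1, integral_indicator measurableSet_Iic, integral_const_mul]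
  congr 1
  have h2 : ∀ z : ℝ, Set.indicator (Iic t) (fun z : ℝ => Real.exp (-(z-s)^2/2)) z
      = Set.indicator (Iic (t - s)) (fun w : ℝ => Real.exp (-w^2/2)) (z - s) := by
    intro z
    rw [Set.indicator_apply, Set.indicator_apply]
    simp only [mem_Iic, sub_le_sub_iff_right]
  rw [← integral_indicator measurableSet_Iic]
  rw [funext h2]
  rw [integral_sub_right_eq_self (Set.indicator (Iic (t - s)) (fun w : ℝ => Real.exp (-w^2/2))) s]
  rw [integral_indicator measurableSet_Iic]

lemma pointwise_bound (β γ α lε N lx : ℝ) (hβ : 0 < β) (hγ : 0 < γ) (hγβ : γ < β^2)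
    (hα : α = γ / β^2) (hN : 1 ≤ N) :
    (Real.sqrt N * Real.exp (N * γ^2 / (2*β^2)) / Real.exp (γ*N)) *
      (Real.exp lx * Real.exp (-Real.exp lx) *
        ((Real.sqrt (2*π))⁻¹ * (Real.exp ((β*Real.sqrt N)^2/2) *
          ∫ w in Iic ((lε + γ*N - lx)/(β*Real.sqrt N) - β*Real.sqrt N), Real.exp (-w^2/2))))
    ≤ (2*β/(β^2-γ)) * (Real.sqrt (2*π))⁻¹ * Real.exp (lε*(1-α)) * Real.exp (lx*α) *
        Real.exp (-Real.exp lx)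
      + (Real.exp lε * Real.sqrt N *
          Real.exp ((β^2-γ)^2*N/(2*β^2) - (β^2-γ)*N/2)) * Real.exp (-Real.exp lx) := by
  have hN0 : 0 < N := lt_of_lt_of_le one_pos hN
  have hrN : 0 < Real.sqrt N := Real.sqrt_pos.mpr hN0
  have hss : Real.sqrt N * Real.sqrt N = N := Real.mul_self_sqrt hN0.le
  have hA : 0 < β^2 - γ := sub_pos.mpr hγβ
  have hs : 0 < β * Real.sqrt N := mul_pos hβ hrN
  have hs2 : (β*Real.sqrt N)^2 = β^2 * N := by rw [mul_pow, Real.sq_sqrt hN0.le]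
  have h2π : 0 < Real.sqrt (2*π) := Real.sqrt_pos.mpr (by positivity)
  set I := ∫ w in Iic ((lε + γ*N - lx)/(β*Real.sqrt N) - β*Real.sqrt N), Real.exp (-w^2/2)
    with hI_def
  have hI0 : 0 ≤ I := setIntegral_nonneg measurableSet_Iic (fun w _ => (Real.exp_pos _).le)
  have hC0 : 0 ≤ Real.sqrt N * Real.exp (N * γ^2 / (2*β^2)) / Real.exp (γ*N) *
      (Real.exp lx * Real.exp (-Real.exp lx) *
        ((Real.sqrt (2*π))⁻¹ * Real.exp ((β*Real.sqrt N)^2/2))) := by positivity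
  by_cases hcase : lε - (β^2-γ)*N/2 ≤ lx
  · -- main region
    set u := ((β^2-γ)*N + (lx - lε))/(β*Real.sqrt N) with hu_def
    have hnum : (β^2-γ)*N/2 ≤ (β^2-γ)*N + (lx - lε) := by nlinarith
    have hnum0 : 0 < (β^2-γ)*N/2 := by positivity
    have hu : 0 < u := div_pos (lt_of_lt_of_le hnum0 hnum) hs
    have hts : (lε + γ*N - lx)/(β*Real.sqrt N) - β*Real.sqrt N = -u := by
      rw [hu_def]
      field_simp
      linear_combination (-β^2) * hss
    have hInt : I ≤ u⁻¹ * Real.exp (-u^2/2) := by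
      rw [hI_def, hts]; exact Iic_gauss_le_tail hu le_rfl
    have hu_inv : u⁻¹ ≤ 2*(β*Real.sqrt N)/((β^2-γ)*N) := by
      calc u⁻¹ ≤ (((β^2-γ)*N/2)/(β*Real.sqrt N))⁻¹ := by
            apply inv_anti₀ (by positivity)
            rw [hu_def]; gcongr
        _ = 2*(β*Real.sqrt N)/((β^2-γ)*N) := by field_simp
    have hexp2 : Real.exp (-u^2/2) ≤
        Real.exp (-((β^2-γ)^2*N/(2*β^2)) - (β^2-γ)*(lx-lε)/β^2) := by
      apply Real.exp_le_exp.mpr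
      have key : ((β^2-γ)*N)^2 + 2*((β^2-γ)*N)*(lx-lε) ≤ ((β^2-γ)*N + (lx-lε))^2 := by
        nlinarith [sq_nonneg (lx - lε)]
      have h3 : u^2 = ((β^2-γ)*N + (lx-lε))^2/(β^2*N) := by rw [hu_def, div_pow, hs2]
      have h4 : (((β^2-γ)*N)^2 + 2*((β^2-γ)*N)*(lx-lε))/(β^2*N)
          = (β^2-γ)^2*N/β^2 + 2*(β^2-γ)*(lx-lε)/β^2 := by field_simp
      have h5 : (β^2-γ)^2*N/β^2 + 2*(β^2-γ)*(lx-lε)/β^2 ≤ u^2 := by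
        rw [h3, ← h4]; gcongr
      calc -u^2/2 ≤ -((β^2-γ)^2*N/β^2 + 2*(β^2-γ)*(lx-lε)/β^2)/2 := by linarith
        _ = -((β^2-γ)^2*N/(2*β^2)) - (β^2-γ)*(lx-lε)/β^2 := by ring
    have hbound : I ≤ 2*(β*Real.sqrt N)/((β^2-γ)*N) *
        Real.exp (-((β^2-γ)^2*N/(2*β^2)) - (β^2-γ)*(lx-lε)/β^2) := by
      calc I ≤ u⁻¹ * Real.exp (-u^2/2) := hInt
        _ ≤ _ := mul_le_mul hu_inv hexp2 (Real.exp_pos _).le (by positivity)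
    refine le_trans ?_ (le_add_of_nonneg_right (by positivity))
    calc (Real.sqrt N * Real.exp (N * γ^2 / (2*β^2)) / Real.exp (γ*N)) *
      (Real.exp lx * Real.exp (-Real.exp lx) *
        ((Real.sqrt (2*π))⁻¹ * (Real.exp ((β*Real.sqrt N)^2/2) * I)))
        ≤ (Real.sqrt N * Real.exp (N * γ^2 / (2*β^2)) / Real.exp (γ*N)) *
      (Real.exp lx * Real.exp (-Real.exp lx) *
        ((Real.sqrt (2*π))⁻¹ * (Real.exp ((β*Real.sqrt N)^2/2) *
          (2*(β*Real.sqrt N)/((β^2-γ)*N) *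
            Real.exp (-((β^2-γ)^2*N/(2*β^2)) - (β^2-γ)*(lx-lε)/β^2))))) := by
          gcongr
      _ = (Real.sqrt N * (Real.sqrt (2*π))⁻¹ * (2*(β*Real.sqrt N)/((β^2-γ)*N))) *
          Real.exp (N*γ^2/(2*β^2) - γ*N + lx + (β*Real.sqrt N)^2/2 +
            (-((β^2-γ)^2*N/(2*β^2)) - (β^2-γ)*(lx-lε)/β^2)) * Real.exp (-Real.exp lx) := by
          simp only [Real.exp_add, Real.exp_sub, Real.exp_neg]
          ring
      _ = (2*β/(β^2-γ)) * (Real.sqrt (2*π))⁻¹ * Real.exp (lε*(1-α)) * Real.exp (lx*α) *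
          Real.exp (-Real.exp lx) := by
          rw [show N*γ^2/(2*β^2) - γ*N + lx + (β*Real.sqrt N)^2/2 +
            (-((β^2-γ)^2*N/(2*β^2)) - (β^2-γ)*(lx-lε)/β^2) = lε*(1-α) + lx*α from by
              rw [hs2, hα]; field_simp; ring]
          have hsub : Real.sqrt N * (2*(β*Real.sqrt N)/((β^2-γ)*N)) = 2*β/(β^2-γ) := by
            field_simp
            linear_combination hss
          rw [show Real.sqrt N * (Real.sqrt (2*π))⁻¹ * (2*(β*Real.sqrt N)/((β^2-γ)*N))
            = 2*β/(β^2-γ) * (Real.sqrt (2*π))⁻¹ from by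
              linear_combination (Real.sqrt (2*π))⁻¹ * hsub]
          rw [Real.exp_add]; ring
  · push_neg at hcase
    have hIb : I ≤ Real.sqrt (2*π) := Iic_gauss_le_total _
    refine le_trans ?_ (le_add_of_nonneg_left (by positivity))
    calc (Real.sqrt N * Real.exp (N * γ^2 / (2*β^2)) / Real.exp (γ*N)) *
      (Real.exp lx * Real.exp (-Real.exp lx) *
        ((Real.sqrt (2*π))⁻¹ * (Real.exp ((β*Real.sqrt N)^2/2) * I)))
        ≤ (Real.sqrt N * Real.exp (N * γ^2 / (2*β^2)) / Real.exp (γ*N)) *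
      (Real.exp lx * Real.exp (-Real.exp lx) *
        ((Real.sqrt (2*π))⁻¹ * (Real.exp ((β*Real.sqrt N)^2/2) * Real.sqrt (2*π)))) := by
          gcongr
      _ = Real.sqrt N * Real.exp (N*γ^2/(2*β^2) - γ*N + lx + (β*Real.sqrt N)^2/2) *
          Real.exp (-Real.exp lx) := by
          simp only [Real.exp_add, Real.exp_sub]
          field_simp
      _ ≤ Real.sqrt N * Real.exp (N*γ^2/(2*β^2) - γ*N + (lε - (β^2-γ)*N/2) +
            (β*Real.sqrt N)^2/2) * Real.exp (-Real.exp lx) := by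
          gcongr
      _ = (Real.exp lε * Real.sqrt N *
          Real.exp ((β^2-γ)^2*N/(2*β^2) - (β^2-γ)*N/2)) * Real.exp (-Real.exp lx) := by
          rw [show N*γ^2/(2*β^2) - γ*N + (lε - (β^2-γ)*N/2) + (β*Real.sqrt N)^2/2
            = lε + ((β^2-γ)^2*N/(2*β^2) - (β^2-γ)*N/2) from by rw [hs2]; field_simp; ring]
          rw [Real.exp_add]; ring

theorem truncated_mean_estimate (β γ : ℝ) (hβ : 0 < β) (hγ : 0 < γ) (hγβ : γ < β ^ 2)
    (c a : ℕ → ℝ) (hc : ∀ n, c n = Real.exp (γ * n))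
    (ha : ∀ n, a n = Real.sqrt n * Real.exp (n * γ ^ 2 / (2 * β ^ 2)))
    (α : ℝ) (hα : α = γ / β ^ 2) (ε : ℝ) (hε : ε ∈ Set.Ioc (0:ℝ) 1) :
    Filter.limsup (fun n : ℕ =>
        (a n / c n) * ∫ x in Ioi (0:ℝ), x * Real.exp (-x) *
          ((Real.sqrt (2 * π))⁻¹ * ∫ z : ℝ,
            (if x * Real.exp (β * Real.sqrt n * z) ≤ ε * c n then
              Real.exp (-z ^ 2 / 2) * Real.exp (β * Real.sqrt n * z) else 0))) atTop
      ≤ (β - γ / β)⁻¹ * ε ^ ((1:ℝ) - α) * ∫ x in Ioi (0:ℝ), x ^ α * Real.exp (-x) := by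
  obtain ⟨hε0, hε1⟩ := hε
  have hβ2 : (0:ℝ) < β ^ 2 := by positivity
  have hA : 0 < β ^ 2 - γ := sub_pos.mpr hγβ
  have hα0 : 0 < α := hα ▸ div_pos hγ hβ2
  set G := ∫ x in Ioi (0:ℝ), x ^ α * Real.exp (-x) with hG_def
  have hGint : IntegrableOn (fun x : ℝ => x ^ α * Real.exp (-x)) (Ioi 0) := by
    have h := Real.GammaIntegral_convergent (s := α + 1) (by positivity)
    refine h.congr_fun (fun x hx => ?_) measurableSet_Ioi
    rw [show α + 1 - 1 = α by ring, mul_comm]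
  have hG0 : 0 ≤ G :=
    setIntegral_nonneg measurableSet_Ioi (fun x hx => by
      have : (0:ℝ) < x := hx
      positivity)
  have hexpint : IntegrableOn (fun x : ℝ => Real.exp (-x)) (Ioi 0) := by
    simpa using exp_neg_integrableOn_Ioi (0:ℝ) one_pos
  set B1 : ℝ := (2*β/(β^2-γ)) * (Real.sqrt (2*π))⁻¹ * ε ^ ((1:ℝ)-α) with hB1_def
  set D : ℕ → ℝ := fun n => ε * Real.sqrt n *
    Real.exp ((β^2-γ)^2*(n:ℝ)/(2*β^2) - (β^2-γ)*(n:ℝ)/2) with hD_def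
  -- nonnegativity of the terms
  have hterm0 : ∀ n : ℕ, 0 ≤ (a n / c n) * ∫ x in Ioi (0:ℝ), x * Real.exp (-x) *
          ((Real.sqrt (2 * π))⁻¹ * ∫ z : ℝ,
            (if x * Real.exp (β * Real.sqrt n * z) ≤ ε * c n then
              Real.exp (-z ^ 2 / 2) * Real.exp (β * Real.sqrt n * z) else 0)) := by
    intro n
    have h1 : 0 ≤ a n / c n := by rw [ha, hc]; positivity
    refine mul_nonneg h1 (setIntegral_nonneg measurableSet_Ioi (fun x hx => ?_))
    have hx : (0:ℝ) < x := hx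
    refine mul_nonneg (by positivity) (mul_nonneg (by positivity)
      (integral_nonneg fun z => ?_))
    dsimp only
    split
    · positivity
    · exact le_rfl
  have hkey : ∀ᶠ n : ℕ in atTop, (a n / c n) * (∫ x in Ioi (0:ℝ), x * Real.exp (-x) *
          ((Real.sqrt (2 * π))⁻¹ * ∫ z : ℝ,
            (if x * Real.exp (β * Real.sqrt n * z) ≤ ε * c n then
              Real.exp (-z ^ 2 / 2) * Real.exp (β * Real.sqrt n * z) else 0)))
      ≤ B1 * G + D n := by
    filter_upwards [eventually_ge_atTop 1] with n hn
    have hN1 : (1:ℝ) ≤ (n:ℝ) := by exact_mod_cast hn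
    have hrN : 0 < Real.sqrt n := Real.sqrt_pos.mpr (by linarith)
    have hs : 0 < β * Real.sqrt n := mul_pos hβ hrN
    have hM : 0 < ε * c n := by rw [hc]; positivity
    rw [← integral_const_mul]
    have hstep : ∫ x in Ioi (0:ℝ), (B1 * (x ^ α * Real.exp (-x)) + D n * Real.exp (-x))
        = B1 * G + D n := by
      rw [MeasureTheory.integral_add (hGint.const_mul _) (hexpint.const_mul _),
        integral_const_mul, integral_const_mul,
        integral_exp_neg_Ioi_zero, mul_one, hG_def]
    rw [← hstep]
    refine integral_mono_of_nonneg ?_ ((hGint.const_mul _).add (hexpint.const_mul _)) ?_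
    · refine (ae_restrict_iff' measurableSet_Ioi).mpr (Eventually.of_forall fun x hx => ?_)
      have hx' : (0:ℝ) < x := hx
      have h1 : 0 ≤ a n / c n := by rw [ha, hc]; positivity
      refine mul_nonneg h1 (mul_nonneg (by positivity) (mul_nonneg (by positivity)
        (integral_nonneg fun z => ?_)))
      dsimp only
      split
      · positivity
      · exact le_rfl
    · refine (ae_restrict_iff' measurableSet_Ioi).mpr (Eventually.of_forall fun x hx => ?_)
      have hx' : (0:ℝ) < x := hx
      dsimp only
      rw [inner_eq x (ε * c n) (β * Real.sqrt n) hx' hM hs, ha, hc]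
      have hlog : Real.log (ε * Real.exp (γ*n) / x) = Real.log ε + γ*n - Real.log x := by
        rw [Real.log_div (by positivity) (ne_of_gt hx'),
          Real.log_mul (ne_of_gt hε0) (Real.exp_ne_zero _), Real.log_exp]
      rw [hlog]
      have hpb := pointwise_bound β γ α (Real.log ε) (n:ℝ) (Real.log x) hβ hγ hγβ hα hN1
      rw [Real.exp_log hx', Real.exp_log hε0, ← Real.rpow_def_of_pos hx',
        ← Real.rpow_def_of_pos hε0] at hpb
      refine hpb.trans (le_of_eq ?_)
      rw [hB1_def, hD_def]
      ring
  have hD0 : Tendsto D atTop (nhds 0) := by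
    have h1 : Tendsto (fun x : ℝ => x ^ ((1:ℝ)/2) *
        Real.exp (-((β^2-γ)*γ/(2*β^2)) * x)) atTop (nhds 0) :=
      tendsto_rpow_mul_exp_neg_mul_atTop_nhds_zero _ _ (by positivity)
    have h2 : Tendsto (fun n : ℕ => ((n:ℝ) ^ ((1:ℝ)/2) *
        Real.exp (-((β^2-γ)*γ/(2*β^2)) * (n:ℝ)))) atTop (nhds 0) :=
      h1.comp tendsto_natCast_atTop_atTop
    have h3 := h2.const_mul ε
    rw [mul_zero] at h3
    refine Tendsto.congr (fun n => ?_) h3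
    rw [hD_def]
    dsimp only
    rw [Real.sqrt_eq_rpow]
    rw [show -((β^2-γ)*γ/(2*β^2)) * (n:ℝ) = (β^2-γ)^2*(n:ℝ)/(2*β^2) - (β^2-γ)*(n:ℝ)/2 from by
      field_simp; ring]
    ring
  have hTend : Tendsto (fun n => B1 * G + D n) atTop (nhds (B1 * G)) := by
    simpa using tendsto_const_nhds.add hD0
  have hlimsup : Filter.limsup (fun n : ℕ =>
        (a n / c n) * ∫ x in Ioi (0:ℝ), x * Real.exp (-x) *
          ((Real.sqrt (2 * π))⁻¹ * ∫ z : ℝ,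
            (if x * Real.exp (β * Real.sqrt n * z) ≤ ε * c n then
              Real.exp (-z ^ 2 / 2) * Real.exp (β * Real.sqrt n * z) else 0))) atTop
      ≤ B1 * G := by
    calc Filter.limsup (fun n : ℕ =>
        (a n / c n) * ∫ x in Ioi (0:ℝ), x * Real.exp (-x) *
          ((Real.sqrt (2 * π))⁻¹ * ∫ z : ℝ,
            (if x * Real.exp (β * Real.sqrt n * z) ≤ ε * c n then
              Real.exp (-z ^ 2 / 2) * Real.exp (β * Real.sqrt n * z) else 0))) atTop
        ≤ Filter.limsup (fun n => B1 * G + D n) atTop :=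
          Filter.limsup_le_limsup hkey
            (isCoboundedUnder_le_of_eventually_le atTop (Eventually.of_forall hterm0))
            hTend.isBoundedUnder_le
      _ = B1 * G := hTend.limsup_eq
  refine hlimsup.trans ?_
  have h2sq : (2:ℝ) ≤ Real.sqrt (2*π) := by
    nlinarith [Real.sq_sqrt (by positivity : (0:ℝ) ≤ 2*π), Real.sqrt_nonneg (2*π),
      Real.pi_gt_three]
  have hcoef : (2*β/(β^2-γ)) * (Real.sqrt (2*π))⁻¹ ≤ β/(β^2-γ) := by
    calc (2*β/(β^2-γ)) * (Real.sqrt (2*π))⁻¹ ≤ (2*β/(β^2-γ)) * (2:ℝ)⁻¹ := by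
          refine mul_le_mul_of_nonneg_left ?_ (by positivity)
          exact inv_anti₀ (by norm_num) h2sq
      _ = β/(β^2-γ) := by ring
  have hβγ : (β - γ/β)⁻¹ = β/(β^2-γ) := by
    rw [show β - γ/β = (β^2-γ)/β from by field_simp, inv_div]
  rw [hβγ, hB1_def]
  calc (2*β/(β^2-γ)) * (Real.sqrt (2*π))⁻¹ * ε ^ ((1:ℝ)-α) * G
      = ((2*β/(β^2-γ)) * (Real.sqrt (2*π))⁻¹) * (ε ^ ((1:ℝ)-α) * G) := by ring
    _ ≤ (β/(β^2-γ)) * (ε ^ ((1:ℝ)-α) * G) := by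
        refine mul_le_mul_of_nonneg_right hcoef (by positivity)
    _ = β/(β^2-γ) * ε ^ ((1:ℝ)-α) * G := by ring
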